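/- Let X ⊂ ℝ^d be relatively separated and s > d. Then the Jaffard class J_s is closed under matrix multiplication: there exists a constant C > 0 such that ‖A·B‖_{J_s} ≤ C‖A‖_{J_s}‖B‖_{J_s} for all A,B ∈ J_s, where (A·B)_{k,l} = Σ_{n∈X} A_{k,n}B_{n,l} (the series converging in operator norm). -/

import Mathlib

open scoped BigOperators

noncomputable section

abbrev E (d : ℕ) := EuclideanSpace ℝ (Fin d)

/-- `X ⊂ ℝ^d` is relatively separated: the number of points of `X` in any
translated unit cube is uniformly bounded. -/
def RelSep {d : ℕ} (X : Set (E d)) : Prop :=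
  ∃ N : ℕ, ∀ x : E d,
    (X ∩ {y | ∀ i, x i ≤ y i ∧ y i ≤ x i + 1}).Finite ∧
    (X ∩ {y | ∀ i, x i ≤ y i ∧ y i ≤ x i + 1}).ncard ≤ N

private lemma abs_coord_le_norm {d : ℕ} (v : E d) (i : Fin d) : |v i| ≤ ‖v‖ := by
  rw [EuclideanSpace.norm_eq, ← Real.sqrt_sq_eq_abs]
  apply Real.sqrt_le_sqrt
  simpa [Real.norm_eq_abs, sq_abs] using
    Finset.single_le_sum (f := fun j => ‖v j‖ ^ 2) (fun j _ => sq_nonneg _) (Finset.mem_univ i)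

private lemma abs_floor_le (x : ℝ) : |(⌊x⌋ : ℝ)| ≤ |x| + 1 := by
  have h1 : (⌊x⌋ : ℝ) ≤ x := Int.floor_le x
  have h2 : x - 1 < ⌊x⌋ := Int.sub_one_lt_floor x
  have h3 := neg_abs_le x
  have h4 := le_abs_self x
  rw [abs_le]
  constructor <;> linarith

private lemma summable_int_aux {t : ℝ} (ht : 1 < t) :
    Summable fun j : ℤ => ((1 : ℝ) + |(j : ℝ)|) ^ (-t) := by
  have hnat : Summable fun n : ℕ => ((1 : ℝ) + (n : ℝ)) ^ (-t) := by
    have h0 : Summable fun n : ℕ => ((n : ℝ)) ^ (-t) :=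
      Real.summable_nat_rpow.mpr (by linarith)
    have h1 := (summable_nat_add_iff 1).mpr h0
    refine h1.congr fun n => ?_
    push_cast
    rw [add_comm]
  refine Summable.of_nat_of_neg ?_ ?_
  · refine hnat.congr fun n => ?_
    congr 1
    rw [Int.cast_natCast, abs_of_nonneg (Nat.cast_nonneg n)]
  · refine hnat.congr fun n => ?_
    congr 1
    push_cast
    rw [abs_neg, abs_of_nonneg (Nat.cast_nonneg n)]

private lemma summable_prod_aux (d : ℕ) {t : ℝ} (ht : 1 < t) :
    Summable fun m : Fin d → ℤ => ∏ i, ((1 : ℝ) + |(m i : ℝ)|) ^ (-t) := by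
  induction d with
  | zero =>
      have h : ∀ m : Fin 0 → ℤ, ∏ i, ((1 : ℝ) + |(m i : ℝ)|) ^ (-t) = 1 := fun m => by simp
      have : HasSum (fun m : Fin 0 → ℤ => ∏ i, ((1 : ℝ) + |(m i : ℝ)|) ^ (-t))
          (∏ i, ((1 : ℝ) + |((default : Fin 0 → ℤ) i : ℝ)|) ^ (-t)) :=
        hasSum_single default (fun b hb => absurd (Subsingleton.elim b default) hb)
      exact this.summable
  | succ d ih =>
      have hsum := (summable_int_aux ht).mul_of_nonneg ih
        (fun j => by positivity) (fun m => by positivity)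
      refine ((Fin.consEquiv fun _ : Fin (d + 1) => ℤ).summable_iff).mp (hsum.congr fun p => ?_)
      simp [Function.comp, Fin.consEquiv, Fin.prod_univ_succ]

private lemma summable_g {d : ℕ} {s : ℝ} (hs : (d : ℝ) < s) :
    Summable fun m : Fin d → ℤ =>
      ((1 : ℝ) + ((Finset.univ.sup fun i => (m i).natAbs : ℕ) : ℝ)) ^ (-s) := by
  rcases Nat.eq_zero_or_pos d with h0 | hd0
  · subst h0
    have : HasSum (fun m : Fin 0 → ℤ =>
        ((1 : ℝ) + ((Finset.univ.sup fun i => (m i).natAbs : ℕ) : ℝ)) ^ (-s))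
        (((1 : ℝ) + ((Finset.univ.sup fun i => ((default : Fin 0 → ℤ) i).natAbs : ℕ) : ℝ)) ^ (-s)) :=
      hasSum_single default (fun b hb => absurd (Subsingleton.elim b default) hb)
    exact this.summable
  · have hd0' : (0 : ℝ) < d := by exact_mod_cast hd0
    set t := s / d with ht_def
    have ht : 1 < t := (one_lt_div hd0').mpr hs
    refine Summable.of_nonneg_of_le (fun m => by positivity) (fun m => ?_) (summable_prod_aux d ht)
    set M : ℕ := Finset.univ.sup fun i => (m i).natAbs with hM
    have hfac : ∀ i : Fin d, (1 : ℝ) + |(m i : ℝ)| ≤ (1 : ℝ) + (M : ℝ) := by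
      intro i
      have h1 : (m i).natAbs ≤ M :=
        Finset.le_sup (f := fun i => (m i).natAbs) (Finset.mem_univ i)
      have h2 : |(m i : ℝ)| = ((m i).natAbs : ℝ) := by
        rw [Nat.cast_natAbs]; push_cast; ring
      rw [h2]
      have : ((m i).natAbs : ℝ) ≤ (M : ℝ) := by exact_mod_cast h1
      linarith
    have hprod : ∏ i, ((1 : ℝ) + |(m i : ℝ)|) ≤ ((1 : ℝ) + (M : ℝ)) ^ d := by
      have h := Finset.prod_le_prod (s := (Finset.univ : Finset (Fin d)))
        (f := fun i => (1 : ℝ) + |(m i : ℝ)|) (g := fun _ => (1 : ℝ) + (M : ℝ))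
        (fun i _ => by positivity) (fun i _ => hfac i)
      simpa [Finset.prod_const] using h
    have hprodpos : (0 : ℝ) < ∏ i, ((1 : ℝ) + |(m i : ℝ)|) := by
      apply Finset.prod_pos; intro i _; positivity
    calc ((1 : ℝ) + (M : ℝ)) ^ (-s)
        = (((1 : ℝ) + (M : ℝ)) ^ (d : ℕ)) ^ (-t) := by
          rw [← Real.rpow_natCast ((1 : ℝ) + (M : ℝ)) d, ← Real.rpow_mul (by positivity)]
          congr 1
          have hds : (d : ℝ) * (s / (d : ℝ)) = s := by
            rw [mul_comm]
            exact div_mul_cancel₀ s (ne_of_gt hd0')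
          rw [ht_def]
          rw [show (d : ℝ) * -(s / (d : ℝ)) = -((d:ℝ) * (s / (d:ℝ))) by ring, hds]
      _ ≤ (∏ i, ((1 : ℝ) + |(m i : ℝ)|)) ^ (-t) :=
          Real.rpow_le_rpow_of_nonpos hprodpos hprod (by linarith)
      _ = ∏ i, ((1 : ℝ) + |(m i : ℝ)|) ^ (-t) := by
          rw [← Real.finset_prod_rpow _ _ (fun i _ => by positivity)]

private lemma key_lemma {d : ℕ} (X : Set (E d)) (hX : RelSep X) {s : ℝ} (hs : (d : ℝ) < s) :
    ∃ C₀ > (0 : ℝ), ∀ k : E d,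
      Summable (fun n : X => ((1 : ℝ) + ‖k - (n : E d)‖) ^ (-s)) ∧
      (∑' n : X, ((1 : ℝ) + ‖k - (n : E d)‖) ^ (-s)) ≤ C₀ := by
  classical
  obtain ⟨N, hN⟩ := hX
  have hs0 : 0 ≤ s := le_trans (Nat.cast_nonneg d) hs.le
  set g : (Fin d → ℤ) → ℝ := fun m =>
    ((1 : ℝ) + ((Finset.univ.sup fun i => (m i).natAbs : ℕ) : ℝ)) ^ (-s) with hg_def
  have hgsum : Summable g := summable_g hs
  have hgnn : ∀ m, 0 ≤ g m := fun m => by positivity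
  set S := ∑' m, g m with hS_def
  have hSnn : 0 ≤ S := tsum_nonneg hgnn
  refine ⟨(N : ℝ) * 2 ^ s * S + 1, by positivity, fun k => ?_⟩
  set f : X → ℝ := fun n => ((1 : ℝ) + ‖k - (n : E d)‖) ^ (-s) with hf_def
  have hfnn : ∀ n, 0 ≤ f n := fun n => by positivity
  set π : X → (Fin d → ℤ) := fun n i => ⌊(n : E d) i - k i⌋ with hπ_def
  -- pointwise bound
  have hpoint : ∀ n : X, f n ≤ 2 ^ s * g (π n) := by
    intro n
    set M : ℕ := Finset.univ.sup fun i => (π n i).natAbs with hM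
    have hnorm : (0 : ℝ) ≤ ‖k - (n : E d)‖ := norm_nonneg _
    have hMle : (1 : ℝ) + (M : ℝ) ≤ 2 * ((1 : ℝ) + ‖k - (n : E d)‖) := by
      rcases (Finset.univ : Finset (Fin d)).eq_empty_or_nonempty with he | hne
      · have : M = 0 := by rw [hM, he, Finset.sup_empty]; rfl
        rw [this]; push_cast; linarith
      · obtain ⟨i, _, hi⟩ := Finset.exists_mem_eq_sup Finset.univ hne fun i => (π n i).natAbs
        have hMr : (M : ℝ) = |((π n i : ℤ) : ℝ)| := by
          rw [hM, hi, Nat.cast_natAbs]; push_cast; ring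
        have hfl : |((π n i : ℤ) : ℝ)| ≤ |(n : E d) i - k i| + 1 :=
          abs_floor_le ((n : E d) i - k i)
        have hcoord : |(n : E d) i - k i| ≤ ‖k - (n : E d)‖ := by
          have h1 : |(k - (n : E d)) i| ≤ ‖k - (n : E d)‖ := abs_coord_le_norm _ i
          have h2 : (k - (n : E d)) i = k i - (n : E d) i := by simp
          rw [h2] at h1
          rwa [abs_sub_comm]
        rw [hMr]
        linarith
    have h2pos : (0 : ℝ) < (1 + (M : ℝ)) / 2 := by positivity
    have hstep : ((1 : ℝ) + ‖k - (n : E d)‖) ^ (-s) ≤ (((1 : ℝ) + (M : ℝ)) / 2) ^ (-s) :=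
      Real.rpow_le_rpow_of_nonpos h2pos (by linarith) (by linarith)
    have heq : (((1 : ℝ) + (M : ℝ)) / 2) ^ (-s) = 2 ^ s * ((1 : ℝ) + (M : ℝ)) ^ (-s) := by
      rw [Real.div_rpow (by positivity) (by norm_num : (0:ℝ) ≤ 2),
        Real.rpow_neg (by norm_num : (0:ℝ) ≤ 2), div_eq_mul_inv, inv_inv]
      ring
    calc f n ≤ (((1 : ℝ) + (M : ℝ)) / 2) ^ (-s) := hstep
      _ = 2 ^ s * ((1 : ℝ) + (M : ℝ)) ^ (-s) := heq
      _ = 2 ^ s * g (π n) := by rw [hg_def]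
  -- fiber cardinality bound
  have hcard : ∀ (u : Finset X) (m : Fin d → ℤ),
      (u.filter fun n => π n = m).card ≤ N := by
    intro u m
    set x : E d := WithLp.toLp 2 (fun i => k i + (m i : ℝ)) with hx
    have hsub : (↑((u.filter fun n => π n = m).image Subtype.val) : Set (E d)) ⊆
        X ∩ {y | ∀ i, x i ≤ y i ∧ y i ≤ x i + 1} := by
      intro y hy
      simp only [Finset.coe_image, Set.mem_image, Finset.mem_coe, Finset.mem_filter] at hy
      obtain ⟨n, ⟨_, hπn⟩, rfl⟩ := hy
      refine ⟨n.2, fun i => ?_⟩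
      have h1 : ⌊(n : E d) i - k i⌋ = m i := congrFun hπn i
      have h2 : ((m i : ℝ)) ≤ (n : E d) i - k i := by rw [← h1]; exact Int.floor_le _
      have h3 : (n : E d) i - k i < (m i : ℝ) + 1 := by rw [← h1]; exact Int.lt_floor_add_one _
      constructor
      · show k i + (m i : ℝ) ≤ (n : E d) i; linarith
      · show (n : E d) i ≤ k i + (m i : ℝ) + 1; linarith
    have h1 : ((u.filter fun n => π n = m).image Subtype.val).card ≤ N := by
      have h2 := Set.ncard_le_ncard hsub (hN x).1
      rw [Set.ncard_coe_finset] at h2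
      exact le_trans h2 (hN x).2
    rwa [Finset.card_image_of_injective _ Subtype.val_injective] at h1
  -- finite-sum bound
  have main : ∀ u : Finset X, ∑ n ∈ u, f n ≤ (N : ℝ) * 2 ^ s * S := by
    intro u
    have step1 : ∑ n ∈ u, f n ≤ ∑ n ∈ u, 2 ^ s * g (π n) :=
      Finset.sum_le_sum fun n _ => hpoint n
    have step2 : ∑ n ∈ u, g (π n)
        = ∑ m ∈ u.image π, (u.filter fun n => π n = m).card • g m := Finset.sum_comp g π
    have step3 : ∑ m ∈ u.image π, ((u.filter fun n => π n = m).card • g m)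
        ≤ ∑ m ∈ u.image π, (N : ℝ) * g m := by
      refine Finset.sum_le_sum fun m _ => ?_
      rw [nsmul_eq_mul]
      exact mul_le_mul_of_nonneg_right (by exact_mod_cast hcard u m) (hgnn m)
    have step4 : ∑ m ∈ u.image π, g m ≤ S :=
      Summable.sum_le_tsum _ (fun m _ => hgnn m) hgsum
    have step5 : ∑ m ∈ u.image π, (N : ℝ) * g m = (N : ℝ) * ∑ m ∈ u.image π, g m :=
      (Finset.mul_sum _ _ _).symm
    calc ∑ n ∈ u, f n ≤ ∑ n ∈ u, 2 ^ s * g (π n) := step1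
      _ = 2 ^ s * ∑ n ∈ u, g (π n) := (Finset.mul_sum _ _ _).symm
      _ ≤ 2 ^ s * ((N : ℝ) * S) := by
          apply mul_le_mul_of_nonneg_left _ (by positivity : (0:ℝ) ≤ 2 ^ s)
          rw [step2]
          refine le_trans step3 ?_
          rw [step5]
          exact mul_le_mul_of_nonneg_left step4 (Nat.cast_nonneg N)
      _ = (N : ℝ) * 2 ^ s * S := by ring
  have hsum : Summable f := summable_of_sum_le hfnn main
  exact ⟨hsum, le_trans (Summable.tsum_le_of_sum_le hsum main) (by linarith)⟩

private lemma conv_half {s : ℝ} (hs : 0 ≤ s) {a b c : ℝ} (ha : 0 < a) (hb : 0 < b)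
    (hc0 : 0 < c) (h : c ≤ 2 * b) :
    a ^ (-s) * b ^ (-s) * c ^ s ≤ 2 ^ s * a ^ (-s) := by
  have h1 : c ^ s ≤ (2 * b) ^ s := Real.rpow_le_rpow hc0.le h (by linarith)
  have h2 : (2 * b) ^ s = 2 ^ s * b ^ s := Real.mul_rpow (by norm_num) hb.le
  have h3 : b ^ (-s) * b ^ s = 1 := by
    rw [← Real.rpow_add hb]; simp
  calc a ^ (-s) * b ^ (-s) * c ^ s ≤ a ^ (-s) * b ^ (-s) * (2 ^ s * b ^ s) := by
        apply mul_le_mul_of_nonneg_left (h1.trans_eq h2) (by positivity)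
    _ = 2 ^ s * a ^ (-s) * (b ^ (-s) * b ^ s) := by ring
    _ = 2 ^ s * a ^ (-s) := by rw [h3]; ring

private lemma conv_ineq {s : ℝ} (hs : 0 ≤ s) {a b c : ℝ} (ha : 1 ≤ a) (hb : 1 ≤ b)
    (hc1 : 1 ≤ c) (hc : c ≤ a + b) :
    a ^ (-s) * b ^ (-s) * c ^ s ≤ 2 ^ s * (a ^ (-s) + b ^ (-s)) := by
  have ha0 : (0 : ℝ) < a := by linarith
  have hb0 : (0 : ℝ) < b := by linarith
  have hc0 : (0 : ℝ) < c := by linarith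
  have hbs : (0 : ℝ) ≤ b ^ (-s) := by positivity
  have has : (0 : ℝ) ≤ a ^ (-s) := by positivity
  have h2s : (0 : ℝ) ≤ 2 ^ s := by positivity
  rcases le_total a b with h | h
  · have := conv_half hs ha0 hb0 hc0 (by linarith)
    nlinarith
  · have := conv_half hs hb0 ha0 hc0 (by linarith)
    nlinarith [this, mul_comm (a ^ (-s)) (b ^ (-s))]

theorem stmt6 {d : ℕ} (X : Set (E d)) (hX : RelSep X) (s : ℝ) (hs : (d : ℝ) < s)
    (H : Type*) [NormedAddCommGroup H] [InnerProductSpace ℂ H] [CompleteSpace H] :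
    ∃ C > (0 : ℝ), ∀ (A B : X → X → H →L[ℂ] H) (MA MB : ℝ),
      (∀ k l : X, ‖A k l‖ * (1 + ‖(k : E d) - (l : E d)‖) ^ s ≤ MA) →
      (∀ k l : X, ‖B k l‖ * (1 + ‖(k : E d) - (l : E d)‖) ^ s ≤ MB) →
      ∀ k l : X,
        Summable (fun n : X => (A k n).comp (B n l)) ∧
        ‖∑' n : X, (A k n).comp (B n l)‖ * (1 + ‖(k : E d) - (l : E d)‖) ^ s
          ≤ C * MA * MB := by
  have hs0 : 0 ≤ s := le_trans (Nat.cast_nonneg d) hs.le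
  obtain ⟨C₀, hC₀, hkey⟩ := key_lemma X hX hs
  refine ⟨2 * 2 ^ s * C₀, by positivity, ?_⟩
  intro A B MA MB hA hB k l
  -- nonnegativity of MA MB
  have hMA : 0 ≤ MA := le_trans (by positivity) (hA k k)
  have hMB : 0 ≤ MB := le_trans (by positivity) (hB k k)
  set a : X → ℝ := fun n => ((1 : ℝ) + ‖(k : E d) - (n : E d)‖) ^ (-s) with ha_def
  set b : X → ℝ := fun n => ((1 : ℝ) + ‖(n : E d) - (l : E d)‖) ^ (-s) with hb_def
  have hann : ∀ n, 0 ≤ a n := fun n => by positivity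
  have hbnn : ∀ n, 0 ≤ b n := fun n => by positivity
  have ha1 : ∀ n, a n ≤ 1 := fun n =>
    Real.rpow_le_one_of_one_le_of_nonpos (le_add_of_nonneg_right (norm_nonneg _)) (by linarith)
  have hb1 : ∀ n, b n ≤ 1 := fun n =>
    Real.rpow_le_one_of_one_le_of_nonpos (le_add_of_nonneg_right (norm_nonneg _)) (by linarith)
  have hsa : Summable a := (hkey (k : E d)).1
  have hsa' : (∑' n, a n) ≤ C₀ := (hkey (k : E d)).2
  have hbeq : ∀ n : X, b n = ((1 : ℝ) + ‖(l : E d) - (n : E d)‖) ^ (-s) := fun n => by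
    rw [hb_def]; simp only [norm_sub_rev]
  have hsb : Summable b := (hkey (l : E d)).1.congr fun n => (hbeq n).symm
  have hsb' : (∑' n, b n) ≤ C₀ := by
    rw [tsum_congr hbeq]; exact (hkey (l : E d)).2
  -- elementwise bounds
  have hAb : ∀ p q : X, ‖A p q‖ ≤ MA * ((1 : ℝ) + ‖(p : E d) - (q : E d)‖) ^ (-s) := by
    intro p q
    have hcpos : (0 : ℝ) < ((1 : ℝ) + ‖(p : E d) - (q : E d)‖) ^ s :=
      Real.rpow_pos_of_pos (by positivity) _
    rw [Real.rpow_neg (by positivity), ← div_eq_mul_inv]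
    rw [le_div_iff₀ hcpos]
    exact hA p q
  have hBb : ∀ p q : X, ‖B p q‖ ≤ MB * ((1 : ℝ) + ‖(p : E d) - (q : E d)‖) ^ (-s) := by
    intro p q
    have hcpos : (0 : ℝ) < ((1 : ℝ) + ‖(p : E d) - (q : E d)‖) ^ s :=
      Real.rpow_pos_of_pos (by positivity) _
    rw [Real.rpow_neg (by positivity), ← div_eq_mul_inv]
    rw [le_div_iff₀ hcpos]
    exact hB p q
  have hcomp : ∀ n : X, ‖(A k n).comp (B n l)‖ ≤ MA * MB * (a n * b n) := by
    intro n
    calc ‖(A k n).comp (B n l)‖ ≤ ‖A k n‖ * ‖B n l‖ :=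
          ContinuousLinearMap.opNorm_comp_le _ _
      _ ≤ (MA * a n) * (MB * b n) := by
          apply mul_le_mul (hAb k n) (hBb n l) (norm_nonneg _) (by positivity)
      _ = MA * MB * (a n * b n) := by ring
  have hmaj : ∀ n : X, MA * MB * (a n * b n) ≤ MA * MB * a n := by
    intro n
    have h1 : a n * b n ≤ a n := by
      have := mul_le_mul_of_nonneg_left (hb1 n) (hann n)
      simpa using this
    exact mul_le_mul_of_nonneg_left h1 (mul_nonneg hMA hMB)
  have hmaj_sum : Summable (fun n : X => MA * MB * a n) := hsa.mul_left _
  have hnormsum : Summable (fun n : X => ‖(A k n).comp (B n l)‖) :=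
    Summable.of_nonneg_of_le (fun n => norm_nonneg _)
      (fun n => le_trans (hcomp n) (hmaj n)) hmaj_sum
  have hSummable : Summable (fun n : X => (A k n).comp (B n l)) :=
    Summable.of_norm_bounded hmaj_sum (fun n => le_trans (hcomp n) (hmaj n))
  refine ⟨hSummable, ?_⟩
  set c : ℝ := (1 : ℝ) + ‖(k : E d) - (l : E d)‖ with hc_def
  have hc1 : 1 ≤ c := le_add_of_nonneg_right (norm_nonneg _)
  have hcs : (0 : ℝ) ≤ c ^ s := by positivity
  -- key pointwise
  have hpt : ∀ n : X, ‖(A k n).comp (B n l)‖ * c ^ s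
      ≤ MA * MB * 2 ^ s * (a n + b n) := by
    intro n
    have htri : c ≤ ((1 : ℝ) + ‖(k : E d) - (n : E d)‖) + ((1 : ℝ) + ‖(n : E d) - (l : E d)‖) := by
      have := dist_triangle (k : E d) (n : E d) (l : E d)
      simp only [dist_eq_norm] at this
      rw [hc_def]; linarith
    have hconv := conv_ineq hs0 (a := (1 : ℝ) + ‖(k : E d) - (n : E d)‖)
      (b := (1 : ℝ) + ‖(n : E d) - (l : E d)‖) (c := c)
      (le_add_of_nonneg_right (norm_nonneg _)) (le_add_of_nonneg_right (norm_nonneg _)) hc1 htri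
    calc ‖(A k n).comp (B n l)‖ * c ^ s ≤ (MA * MB * (a n * b n)) * c ^ s :=
          mul_le_mul_of_nonneg_right (hcomp n) hcs
      _ = MA * MB * (a n * b n * c ^ s) := by ring
      _ ≤ MA * MB * (2 ^ s * (a n + b n)) := by
          apply mul_le_mul_of_nonneg_left _ (by positivity)
          exact hconv
      _ = MA * MB * 2 ^ s * (a n + b n) := by ring
  -- summability of both sides
  have hlhs : Summable (fun n : X => ‖(A k n).comp (B n l)‖ * c ^ s) :=
    hnormsum.mul_right _
  have hrhs : Summable (fun n : X => MA * MB * 2 ^ s * (a n + b n)) :=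
    ((hsa.add hsb).mul_left _)
  calc ‖∑' n : X, (A k n).comp (B n l)‖ * c ^ s
      ≤ (∑' n : X, ‖(A k n).comp (B n l)‖) * c ^ s :=
        mul_le_mul_of_nonneg_right (norm_tsum_le_tsum_norm hnormsum) hcs
    _ = ∑' n : X, (‖(A k n).comp (B n l)‖ * c ^ s) := (tsum_mul_right).symm
    _ ≤ ∑' n : X, MA * MB * 2 ^ s * (a n + b n) := Summable.tsum_le_tsum hpt hlhs hrhs
    _ = MA * MB * 2 ^ s * ∑' n : X, (a n + b n) := tsum_mul_left
    _ = MA * MB * 2 ^ s * ((∑' n, a n) + (∑' n, b n)) := by rw [Summable.tsum_add hsa hsb]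
    _ ≤ MA * MB * 2 ^ s * (C₀ + C₀) := by
        apply mul_le_mul_of_nonneg_left _ (by positivity)
        linarith
    _ = 2 * 2 ^ s * C₀ * MA * MB := by ring
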